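/- Let p ≥ 5 be a prime, let n ≥ r ≥ 1 be integers, and let G = ⟨x, y, z | x^{p^n} = y^{p^n} = z^{p^r} = 1, [x,y] = z, [x,z] = [y,z] = 1⟩. If g ∈ G does not lie in the Frattini subgroup Φ(G), then the conjugacy class of g in G is exactly the set {g z^i : 0 ≤ i ≤ p^r − 1}. -/

import Mathlib

/-- The relators `x^{p^n}, y^{p^n}, z^{p^r}, [x,y]z⁻¹, [x,z], [y,z]` (with
`[a,b] = aba⁻¹b⁻¹`) in the free group on three generators `x = 0`, `y = 1`, `z = 2`. -/
def heisenbergRels (p n r : ℕ) : Set (FreeGroup (Fin 3)) :=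
  { FreeGroup.of 0 ^ p ^ n, FreeGroup.of 1 ^ p ^ n, FreeGroup.of 2 ^ p ^ r,
    FreeGroup.of 0 * FreeGroup.of 1 * (FreeGroup.of 0)⁻¹ * (FreeGroup.of 1)⁻¹ *
      (FreeGroup.of 2)⁻¹,
    FreeGroup.of 0 * FreeGroup.of 2 * (FreeGroup.of 0)⁻¹ * (FreeGroup.of 2)⁻¹,
    FreeGroup.of 1 * FreeGroup.of 2 * (FreeGroup.of 1)⁻¹ * (FreeGroup.of 2)⁻¹ }

/-- The group `G = ⟨x, y, z ∣ x^{p^n} = y^{p^n} = z^{p^r} = 1, [x,y] = z,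
[x,z] = [y,z] = 1⟩`. -/
abbrev heisenbergGroup (p n r : ℕ) : Type := PresentedGroup (heisenbergRels p n r)

/-- The generator `x` of `heisenbergGroup p n r`. -/
def heisX (p n r : ℕ) : heisenbergGroup p n r := PresentedGroup.of 0

/-- The generator `y` of `heisenbergGroup p n r`. -/
def heisY (p n r : ℕ) : heisenbergGroup p n r := PresentedGroup.of 1

/-- The generator `z` of `heisenbergGroup p n r`. -/
def heisZ (p n r : ℕ) : heisenbergGroup p n r := PresentedGroup.of 2





section Generic
variable {G : Type*} [Group G] {x y z : G}

lemma comm_swap {u v : G} (h : Commute u v) (w : G) : u * (v * w) = v * (u * w) := by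
  rw [← mul_assoc, h.eq, mul_assoc]

variable (hxz : Commute x z) (hyz : Commute y z) (hyx : y * x = x * z⁻¹ * y)

include hxz hyz hyx

lemma L2 (a b : ℤ) : y ^ b * x ^ a = x ^ a * (y ^ b * z ^ (-(a * b))) := by
  have hyx' : SemiconjBy y x (x * z⁻¹) := hyx
  have step1 : SemiconjBy y (x ^ a) (x ^ a * z ^ (-a)) := by
    have h := hyx'.zpow_right a
    rwa [hxz.inv_right.mul_zpow, inv_zpow, ← zpow_neg] at h
  have step2 : SemiconjBy (x ^ a)⁻¹ y (y * z ^ (-a)) := by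
    have e : y * x ^ a = x ^ a * z ^ (-a) * y := step1
    show (x ^ a)⁻¹ * y = y * z ^ (-a) * (x ^ a)⁻¹
    have h2 : y = x ^ a * z ^ (-a) * y * (x ^ a)⁻¹ := by rw [← e]; group
    calc (x ^ a)⁻¹ * y = (x ^ a)⁻¹ * (x ^ a * z ^ (-a) * y * (x ^ a)⁻¹) := by rw [← h2]
      _ = z ^ (-a) * y * (x ^ a)⁻¹ := by group
      _ = y * z ^ (-a) * (x ^ a)⁻¹ := by rw [(hyz.zpow_right (-a)).symm.eq]
  have step3 : SemiconjBy (x ^ a)⁻¹ (y ^ b) (y ^ b * z ^ (-(a * b))) := by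
    have h := step2.zpow_right b
    rwa [(hyz.zpow_right (-a)).mul_zpow, ← zpow_mul, neg_mul] at h
  have e3 : (x ^ a)⁻¹ * y ^ b = y ^ b * z ^ (-(a * b)) * (x ^ a)⁻¹ := step3
  calc y ^ b * x ^ a = x ^ a * ((x ^ a)⁻¹ * y ^ b) * x ^ a := by group
    _ = x ^ a * (y ^ b * z ^ (-(a * b)) * (x ^ a)⁻¹) * x ^ a := by rw [e3]
    _ = x ^ a * (y ^ b * z ^ (-(a * b))) := by group

end Generic

section Generic2
variable {G : Type*} [Group G] {x y z : G}
variable (hxz : Commute x z) (hyz : Commute y z) (hyx : y * x = x * z⁻¹ * y)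

include hxz hyz hyx

lemma mul_form (a b c a' b' c' : ℤ) :
    (x ^ a * y ^ b * z ^ c) * (x ^ a' * y ^ b' * z ^ c') =
      x ^ (a + a') * y ^ (b + b') * z ^ (c + c' - a' * b) := by
  have hL2 : y ^ b * x ^ a' = x ^ a' * (y ^ b * z ^ (-(a' * b))) := L2 hxz hyz hyx a' b
  have czx : z ^ c * x ^ a' = x ^ a' * z ^ c := ((hxz.symm.zpow_left c).zpow_right a').eq
  have czy : z ^ c * y ^ b' = y ^ b' * z ^ c := ((hyz.symm.zpow_left c).zpow_right b').eq
  have czy2 : z ^ (-(a' * b)) * y ^ b' = y ^ b' * z ^ (-(a' * b)) :=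
    ((hyz.symm.zpow_left _).zpow_right b').eq
  calc (x ^ a * y ^ b * z ^ c) * (x ^ a' * y ^ b' * z ^ c')
      = x ^ a * y ^ b * (z ^ c * x ^ a') * (y ^ b' * z ^ c') := by group
    _ = x ^ a * y ^ b * (x ^ a' * z ^ c) * (y ^ b' * z ^ c') := by rw [czx]
    _ = x ^ a * (y ^ b * x ^ a') * (z ^ c * y ^ b') * z ^ c' := by group
    _ = x ^ a * (x ^ a' * (y ^ b * z ^ (-(a' * b)))) * (y ^ b' * z ^ c) * z ^ c' := by
        rw [hL2, czy]
    _ = x ^ a * x ^ a' * y ^ b * (z ^ (-(a' * b)) * y ^ b') * (z ^ c * z ^ c') := by group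
    _ = x ^ a * x ^ a' * y ^ b * (y ^ b' * z ^ (-(a' * b))) * (z ^ c * z ^ c') := by rw [czy2]
    _ = x ^ (a + a') * y ^ (b + b') * z ^ (c + c' - a' * b) := by group

lemma inv_form (a b c : ℤ) :
    (x ^ a * y ^ b * z ^ c)⁻¹ = x ^ (-a) * y ^ (-b) * z ^ (-c - a * b) := by
  apply inv_eq_of_mul_eq_one_right
  rw [mul_form hxz hyz hyx]
  rw [show a + -a = 0 by ring, show b + -b = 0 by ring,
    show c + (-c - a * b) - -a * b = 0 by ring]
  simp

lemma conj_form (a b c α β γ : ℤ) :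
    (x ^ a * y ^ b * z ^ c) * (x ^ α * y ^ β * z ^ γ) * (x ^ a * y ^ b * z ^ c)⁻¹ =
      x ^ α * y ^ β * z ^ (γ + a * β - α * b) := by
  rw [inv_form hxz hyz hyx, mul_form hxz hyz hyx, mul_form hxz hyz hyx]
  rw [show a + α + -a = α by ring, show b + β + -b = β by ring,
    show c + γ - α * b + (-c - a * b) - -a * (b + β) = γ + a * β - α * b by ring]

lemma pow_form (α β γ : ℤ) (k : ℕ) :
    (x ^ α * y ^ β * z ^ γ) ^ k =
      x ^ (k * α) * y ^ (k * β) * z ^ (k * γ - (k.choose 2 : ℤ) * (α * β)) := by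
  induction k with
  | zero => simp
  | succ k ih =>
      rw [pow_succ, ih, mul_form hxz hyz hyx]
      have h2 : ((k + 1).choose 2 : ℤ) = (k.choose 2 : ℤ) + k := by
        rw [Nat.choose_succ_succ k 1, Nat.choose_one_right]
        push_cast; ring
      rw [h2]
      rw [show (k : ℤ) * α + α = ((k : ℕ) + 1 : ℤ) * α by ring,
        show (k : ℤ) * β + β = ((k : ℕ) + 1 : ℤ) * β by ring,
        show (k : ℤ) * γ - (k.choose 2 : ℤ) * (α * β) + γ - α * ((k : ℤ) * β) =
          ((k : ℕ) + 1 : ℤ) * γ - ((k.choose 2 : ℤ) + k) * (α * β) by ring]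
      norm_num

end Generic2

namespace HeisAux

variable {p n r : ℕ}

lemma mk_eq_one {w : FreeGroup (Fin 3)} (h : w ∈ heisenbergRels p n r) :
    PresentedGroup.mk (heisenbergRels p n r) w = 1 :=
  (QuotientGroup.eq_one_iff w).mpr (Subgroup.subset_normalClosure h)

lemma relX : heisX p n r ^ p ^ n = 1 := by
  have h : PresentedGroup.mk (heisenbergRels p n r) (FreeGroup.of 0 ^ p ^ n) = 1 :=
    mk_eq_one (by unfold heisenbergRels; exact Set.mem_insert _ _)
  rw [map_pow] at h; exact h

lemma relY : heisY p n r ^ p ^ n = 1 := by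
  have h : PresentedGroup.mk (heisenbergRels p n r) (FreeGroup.of 1 ^ p ^ n) = 1 :=
    mk_eq_one (by
      unfold heisenbergRels
      exact Set.mem_insert_of_mem _ (Set.mem_insert _ _))
  rw [map_pow] at h; exact h

lemma relZ : heisZ p n r ^ p ^ r = 1 := by
  have h : PresentedGroup.mk (heisenbergRels p n r) (FreeGroup.of 2 ^ p ^ r) = 1 :=
    mk_eq_one (by
      unfold heisenbergRels
      exact Set.mem_insert_of_mem _ (Set.mem_insert_of_mem _ (Set.mem_insert _ _)))
  rw [map_pow] at h; exact h

lemma relXY : heisX p n r * heisY p n r * (heisX p n r)⁻¹ * (heisY p n r)⁻¹ *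
    (heisZ p n r)⁻¹ = 1 := by
  have h := mk_eq_one (p := p) (n := n) (r := r) (w :=
    FreeGroup.of 0 * FreeGroup.of 1 * (FreeGroup.of 0)⁻¹ * (FreeGroup.of 1)⁻¹ *
      (FreeGroup.of 2)⁻¹)
    (by unfold heisenbergRels
        exact Set.mem_insert_of_mem _ (Set.mem_insert_of_mem _
          (Set.mem_insert_of_mem _ (Set.mem_insert _ _))))
  simp only [map_mul, map_inv] at h; exact h

lemma relXZ : heisX p n r * heisZ p n r * (heisX p n r)⁻¹ * (heisZ p n r)⁻¹ = 1 := by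
  have h := mk_eq_one (p := p) (n := n) (r := r) (w :=
    FreeGroup.of 0 * FreeGroup.of 2 * (FreeGroup.of 0)⁻¹ * (FreeGroup.of 2)⁻¹)
    (by unfold heisenbergRels
        exact Set.mem_insert_of_mem _ (Set.mem_insert_of_mem _
          (Set.mem_insert_of_mem _ (Set.mem_insert_of_mem _ (Set.mem_insert _ _)))))
  simp only [map_mul, map_inv] at h; exact h

lemma relYZ : heisY p n r * heisZ p n r * (heisY p n r)⁻¹ * (heisZ p n r)⁻¹ = 1 := by
  have h := mk_eq_one (p := p) (n := n) (r := r) (w :=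
    FreeGroup.of 1 * FreeGroup.of 2 * (FreeGroup.of 1)⁻¹ * (FreeGroup.of 2)⁻¹)
    (by unfold heisenbergRels
        exact Set.mem_insert_of_mem _ (Set.mem_insert_of_mem _
          (Set.mem_insert_of_mem _ (Set.mem_insert_of_mem _
            (Set.mem_insert_of_mem _ (Set.mem_singleton_iff.mpr rfl))))))
  simp only [map_mul, map_inv] at h; exact h

lemma commute_of_commutator {G : Type*} [Group G] {a b : G}
    (h : a * b * a⁻¹ * b⁻¹ = 1) : Commute a b := by
  have h2 := congrArg (· * (b * a)) h
  have : a * b = b * a := by simpa [mul_assoc] using h2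
  exact this

lemma commXZ : Commute (heisX p n r) (heisZ p n r) := commute_of_commutator relXZ
lemma commYZ : Commute (heisY p n r) (heisZ p n r) := commute_of_commutator relYZ

lemma commutatorXY : heisX p n r * heisY p n r * (heisX p n r)⁻¹ * (heisY p n r)⁻¹ =
    heisZ p n r := mul_inv_eq_one.mp relXY

end HeisAux

namespace HeisAux

variable {p n r : ℕ}

lemma relYX : heisY p n r * heisX p n r =
    heisX p n r * (heisZ p n r)⁻¹ * heisY p n r := by
  have h1 : heisX p n r * heisY p n r = heisZ p n r * (heisY p n r * heisX p n r) := by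
    rw [← commutatorXY (p := p) (n := n) (r := r)]; group
  have h2 : heisY p n r * heisX p n r = (heisZ p n r)⁻¹ * (heisX p n r * heisY p n r) := by
    rw [h1]; group
  rw [h2, ← mul_assoc, commXZ.inv_right.symm.eq]

/-- The subgroup of elements in normal form. -/
def nfSubgroup (p n r : ℕ) : Subgroup (heisenbergGroup p n r) where
  carrier := {g | ∃ a b c : ℤ,
    g = heisX p n r ^ a * heisY p n r ^ b * heisZ p n r ^ c}
  one_mem' := ⟨0, 0, 0, by simp⟩
  mul_mem' := by
    rintro _ _ ⟨a, b, c, rfl⟩ ⟨a', b', c', rfl⟩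
    exact ⟨a + a', b + b', c + c' - a' * b, mul_form commXZ commYZ relYX a b c a' b' c'⟩
  inv_mem' := by
    rintro _ ⟨a, b, c, rfl⟩
    exact ⟨-a, -b, -c - a * b, inv_form commXZ commYZ relYX a b c⟩

lemma normal_form (g : heisenbergGroup p n r) :
    ∃ a b c : ℤ, g = heisX p n r ^ a * heisY p n r ^ b * heisZ p n r ^ c := by
  refine PresentedGroup.generated_by _ (nfSubgroup p n r) ?_ g
  intro j
  fin_cases j
  · exact ⟨1, 0, 0, by simp [heisX]⟩
  · exact ⟨0, 1, 0, by simp [heisY]⟩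
  · exact ⟨0, 0, 1, by simp [heisZ]⟩

lemma zpow_eq_one_of_dvd {G : Type*} [Group G] {u : G} {m : ℕ} (hu : u ^ m = 1)
    {t : ℤ} (ht : (m : ℤ) ∣ t) : u ^ t = 1 := by
  obtain ⟨s, rfl⟩ := ht
  rw [zpow_mul, zpow_natCast, hu, one_zpow]

lemma zpow_reduce {G : Type*} [Group G] {u : G} {m : ℕ} (hm : 0 < m) (hu : u ^ m = 1)
    (t : ℤ) : ∃ i : ℕ, i < m ∧ u ^ t = u ^ i := by
  have hm' : (m : ℤ) ≠ 0 := by exact_mod_cast hm.ne'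
  have h0 : (0 : ℤ) ≤ t % m := Int.emod_nonneg t hm'
  have h1 : t % m < m := Int.emod_lt_of_pos t (by exact_mod_cast hm)
  refine ⟨(t % m).toNat, by omega, ?_⟩
  calc u ^ t = u ^ ((m : ℤ) * (t / m) + t % m) := by rw [Int.mul_ediv_add_emod]
    _ = (u ^ (m : ℤ)) ^ (t / m) * u ^ (t % m) := by rw [zpow_add, zpow_mul]
    _ = u ^ (t % m) := by rw [zpow_natCast, hu, one_zpow, one_mul]
    _ = u ^ ((t % m).toNat : ℤ) := by rw [Int.toNat_of_nonneg h0]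
    _ = u ^ (t % m).toNat := zpow_natCast u _

lemma zpow_eq_zpow_of_dvd_sub {G : Type*} [Group G] {u : G} {m : ℕ} (hu : u ^ m = 1)
    {s t : ℤ} (h : (m : ℤ) ∣ s - t) : u ^ s = u ^ t := by
  have hst : s = t + (s - t) := by ring
  rw [hst, zpow_add, zpow_eq_one_of_dvd hu h, mul_one]

section WithPrime

variable (hp : p.Prime) (hp5 : 5 ≤ p) (hrn : r ≤ n)

include hp hp5 hrn

lemma choose_dvd : p ^ r ∣ (p ^ n).choose 2 := by
  have hodd : Odd (p ^ n) := (hp.odd_of_ne_two (by omega)).pow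
  have h2 : 2 ∣ p ^ n - 1 := by
    obtain ⟨t, ht⟩ := hodd
    omega
  rw [Nat.choose_two_right, Nat.mul_div_assoc _ h2]
  exact dvd_mul_of_dvd_left (pow_dvd_pow p hrn) _

lemma pow_order (g : heisenbergGroup p n r) : g ^ p ^ n = 1 := by
  obtain ⟨α, β, γ, rfl⟩ := normal_form g
  rw [pow_form commXZ commYZ relYX]
  have hx : heisX p n r ^ ((p ^ n : ℕ) * α : ℤ) = 1 :=
    zpow_eq_one_of_dvd relX (dvd_mul_right _ _)
  have hy : heisY p n r ^ ((p ^ n : ℕ) * β : ℤ) = 1 :=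
    zpow_eq_one_of_dvd relY (dvd_mul_right _ _)
  have hz : heisZ p n r ^ ((p ^ n : ℕ) * γ - (((p ^ n).choose 2 : ℕ) : ℤ) * (α * β)) = 1 := by
    apply zpow_eq_one_of_dvd relZ
    apply dvd_sub
    · exact dvd_mul_of_dvd_left (by exact_mod_cast pow_dvd_pow p hrn) _
    · exact dvd_mul_of_dvd_left (by exact_mod_cast choose_dvd hp hp5 hrn) _
  rw [hx, hy, hz, one_mul, one_mul]

omit hp5 hrn in
lemma finite_heis : Finite (heisenbergGroup p n r) := by
  have hpn : 0 < p ^ n := pow_pos hp.pos n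
  have hpr : 0 < p ^ r := pow_pos hp.pos r
  apply Finite.of_surjective
    (f := fun t : Fin (p ^ n) × Fin (p ^ n) × Fin (p ^ r) =>
      heisX p n r ^ (t.1 : ℕ) * heisY p n r ^ (t.2.1 : ℕ) * heisZ p n r ^ (t.2.2 : ℕ))
  intro g
  obtain ⟨α, β, γ, rfl⟩ := normal_form g
  obtain ⟨i, hi, hix⟩ := zpow_reduce hpn (relX (p := p) (n := n) (r := r)) α
  obtain ⟨j, hj, hjy⟩ := zpow_reduce hpn (relY (p := p) (n := n) (r := r)) β
  obtain ⟨k, hk, hkz⟩ := zpow_reduce hpr (relZ (p := p) (n := n) (r := r)) γ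
  exact ⟨⟨⟨i, hi⟩, ⟨j, hj⟩, ⟨k, hk⟩⟩, by simp [hix, hjy, hkz, zpow_natCast]⟩

lemma isPGroup_heis : IsPGroup p (heisenbergGroup p n r) :=
  fun g => ⟨n, pow_order hp hp5 hrn g⟩

end WithPrime

end HeisAux

namespace HeisAux

lemma mem_frattini_of_forall {G : Type*} [Group G] {g : G}
    (h : ∀ M : Subgroup G, IsCoatom M → g ∈ M) : g ∈ frattini G := by
  unfold frattini Order.radical
  rw [Subgroup.mem_iInf]
  intro M
  rw [Subgroup.mem_iInf]
  exact h M

lemma quot_subgroups_of_coatom {G : Type*} [Group G] {M : Subgroup G} [M.Normal]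
    (hM : IsCoatom M) (K : Subgroup (G ⧸ M)) : K = ⊥ ∨ K = ⊤ := by
  set f := QuotientGroup.mk' M with hf
  have hsurj : Function.Surjective f := QuotientGroup.mk'_surjective M
  have hle : M ≤ K.comap f := by
    intro m hm
    rw [Subgroup.mem_comap]
    have : f m = 1 := (QuotientGroup.eq_one_iff m).mpr hm
    rw [this]
    exact one_mem K
  rcases hle.lt_or_eq with hlt | heq
  · right
    have ht : K.comap f = ⊤ := hM.2 _ hlt
    rw [← Subgroup.map_comap_eq_self_of_surjective hsurj K, ht,
      Subgroup.map_top_of_surjective f hsurj]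
  · left
    rw [← Subgroup.map_comap_eq_self_of_surjective hsurj K, ← heq, eq_bot_iff]
    rintro q hq
    rw [Subgroup.mem_map] at hq
    obtain ⟨m, hm, rfl⟩ := hq
    rw [Subgroup.mem_bot]
    exact (QuotientGroup.eq_one_iff m).mpr hm

lemma quot_pow_p {p : ℕ} (hp : p.Prime) (hp5 : 5 ≤ p) {G : Type*} [Group G]
    (hpG : IsPGroup p G) {M : Subgroup G} [M.Normal]
    (hM : IsCoatom M) (q : G ⧸ M) : q ^ p = 1 := by
  have hQ : IsPGroup p (G ⧸ M) := hpG.to_quotient M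
  rcases quot_subgroups_of_coatom hM (Subgroup.zpowers (q ^ p)) with hb | ht
  · exact Subgroup.zpowers_eq_bot.mp hb
  · by_cases hq1 : q = 1
    · rw [hq1, one_pow]
    exfalso
    have hqmem : q ∈ Subgroup.zpowers (q ^ p) := ht ▸ Subgroup.mem_top q
    obtain ⟨m, hm⟩ := Subgroup.mem_zpowers_iff.mp hqmem
    have h1 : q ^ ((p : ℤ) * m - 1) = 1 := by
      rw [zpow_sub, zpow_one, zpow_mul, zpow_natCast, hm, mul_inv_cancel]
    obtain ⟨k, hk⟩ := hQ q
    have hfin : IsOfFinOrder q := isOfFinOrder_iff_pow_eq_one.mpr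
      ⟨p ^ k, by positivity, hk⟩
    have hdvd1 : (orderOf q : ℤ) ∣ (p : ℤ) * m - 1 := orderOf_dvd_iff_zpow_eq_one.mpr h1
    have hdvd2 : orderOf q ∣ p ^ k := orderOf_dvd_of_pow_eq_one hk
    obtain ⟨j, hjk, hj⟩ := (Nat.dvd_prime_pow hp).mp hdvd2
    have hj1 : 1 ≤ j := by
      by_contra hj0
      have : j = 0 := by omega
      rw [this, pow_zero] at hj
      exact hq1 (orderOf_eq_one_iff.mp hj)
    have hpord : (p : ℤ) ∣ (orderOf q : ℤ) := by
      exact_mod_cast Int.natCast_dvd_natCast.mpr (hj ▸ dvd_pow_self p (by omega : j ≠ 0))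
    have hpd : (p : ℤ) ∣ (p : ℤ) * m - 1 := hpord.trans hdvd1
    have hone : (p : ℤ) ∣ 1 := by
      have h2 := dvd_sub (dvd_mul_right (p : ℤ) m) hpd
      rwa [show (p : ℤ) * m - ((p : ℤ) * m - 1) = 1 by ring] at h2
    have := Int.le_of_dvd one_pos hone
    omega
end HeisAux

namespace HeisAux

variable {p n r : ℕ}

section Coatoms

variable (hp : p.Prime) (hp5 : 5 ≤ p) (hrn : r ≤ n)
include hp hp5 hrn

lemma mem_coatom (M : Subgroup (heisenbergGroup p n r)) (hM : IsCoatom M) :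
    heisX p n r ^ p ∈ M ∧ heisY p n r ^ p ∈ M ∧ heisZ p n r ∈ M := by
  haveI : Fact p.Prime := ⟨hp⟩
  haveI : Finite (heisenbergGroup p n r) := finite_heis hp
  have hpg := isPGroup_heis hp hp5 hrn
  haveI : Group.IsNilpotent (heisenbergGroup p n r) := hpg.isNilpotent
  haveI hMn : M.Normal :=
    Subgroup.NormalizerCondition.normal_of_coatom M normalizerCondition_of_isNilpotent hM
  have hq : ∀ a : heisenbergGroup p n r, a ^ p ∈ M := by
    intro a
    have h1 : (QuotientGroup.mk' M a) ^ p = 1 := quot_pow_p hp hp5 hpg hM _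
    rw [← map_pow] at h1
    exact (QuotientGroup.eq_one_iff _).mp h1
  refine ⟨hq _, hq _, ?_⟩
  have hnontriv : ∃ q : heisenbergGroup p n r ⧸ M, q ≠ 1 := by
    by_contra hno
    push_neg at hno
    apply hM.1
    rw [eq_top_iff]
    intro a _
    exact (QuotientGroup.eq_one_iff a).mp (hno _)
  obtain ⟨q0, hq0⟩ := hnontriv
  have hzp : Subgroup.zpowers q0 = ⊤ := by
    rcases quot_subgroups_of_coatom hM (Subgroup.zpowers q0) with hb | ht
    · exact absurd (Subgroup.zpowers_eq_bot.mp hb) hq0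
    · exact ht
  obtain ⟨i, hi⟩ := Subgroup.mem_zpowers_iff.mp
    (hzp ▸ Subgroup.mem_top (QuotientGroup.mk' M (heisX p n r)))
  obtain ⟨j, hj⟩ := Subgroup.mem_zpowers_iff.mp
    (hzp ▸ Subgroup.mem_top (QuotientGroup.mk' M (heisY p n r)))
  have hc : Commute (QuotientGroup.mk' M (heisX p n r))
      (QuotientGroup.mk' M (heisY p n r)) := by
    rw [← hi, ← hj]
    exact ((Commute.refl q0).zpow_left i).zpow_right j
  apply (QuotientGroup.eq_one_iff _).mp
  show QuotientGroup.mk' M (heisZ p n r) = 1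
  rw [← commutatorXY (p := p) (n := n) (r := r)]
  simp only [map_mul, map_inv]
  rw [hc.eq]
  group

lemma Xp_mem_frattini : heisX p n r ^ p ∈ frattini (heisenbergGroup p n r) :=
  mem_frattini_of_forall fun M hM => (mem_coatom hp hp5 hrn M hM).1

lemma Yp_mem_frattini : heisY p n r ^ p ∈ frattini (heisenbergGroup p n r) :=
  mem_frattini_of_forall fun M hM => (mem_coatom hp hp5 hrn M hM).2.1

lemma Z_mem_frattini : heisZ p n r ∈ frattini (heisenbergGroup p n r) :=
  mem_frattini_of_forall fun M hM => (mem_coatom hp hp5 hrn M hM).2.2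

lemma mem_frattini_of_div {α β γ : ℤ} (hα : (p : ℤ) ∣ α) (hβ : (p : ℤ) ∣ β) :
    heisX p n r ^ α * heisY p n r ^ β * heisZ p n r ^ γ ∈
      frattini (heisenbergGroup p n r) := by
  obtain ⟨a', rfl⟩ := hα
  obtain ⟨b', rfl⟩ := hβ
  refine mul_mem (mul_mem ?_ ?_) ?_
  · rw [zpow_mul, zpow_natCast]
    exact Subgroup.zpow_mem _ (Xp_mem_frattini hp hp5 hrn) a'
  · rw [zpow_mul, zpow_natCast]
    exact Subgroup.zpow_mem _ (Yp_mem_frattini hp hp5 hrn) b'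
  · exact Subgroup.zpow_mem _ (Z_mem_frattini hp hp5 hrn) γ

end Coatoms

end HeisAux


/-- for a prime `p ≥ 5`, integers `n ≥ r ≥ 1` and
`G = ⟨x, y, z ∣ x^{p^n} = y^{p^n} = z^{p^r} = 1, [x,y] = z, [x,z] = [y,z] = 1⟩`,
if `g ∈ G` does not lie in the Frattini subgroup `Φ(G)` then the conjugacy class of `g`
is exactly `{g * z^i : 0 ≤ i ≤ p^r − 1}`. -/
theorem heisenbergGroup_conj_class_of_not_mem_frattini
    (p n r : ℕ) (hp : p.Prime) (hp5 : 5 ≤ p) (hr : 1 ≤ r) (hrn : r ≤ n)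
    (g : heisenbergGroup p n r) (hg : g ∉ frattini (heisenbergGroup p n r)) :
    {h : heisenbergGroup p n r | IsConj g h} =
      {h : heisenbergGroup p n r | ∃ i : ℕ, i ≤ p ^ r - 1 ∧ h = g * heisZ p n r ^ i} := by
  classical
  obtain ⟨α, β, γ, hg'⟩ := HeisAux.normal_form g
  have hpr : 0 < p ^ r := pow_pos hp.pos r
  have hnd : ¬((p : ℤ) ∣ α ∧ (p : ℤ) ∣ β) := by
    rintro ⟨h1, h2⟩
    exact hg (hg' ▸ HeisAux.mem_frattini_of_div hp hp5 hrn h1 h2)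
  have hgz : ∀ s : ℤ, g * heisZ p n r ^ s =
      heisX p n r ^ α * heisY p n r ^ β * heisZ p n r ^ (γ + s) := by
    intro s
    rw [hg', mul_assoc, ← zpow_add]
  ext h
  simp only [Set.mem_setOf_eq]
  constructor
  · intro hc
    rw [isConj_iff] at hc
    obtain ⟨w, rfl⟩ := hc
    obtain ⟨a, b, c, rfl⟩ := HeisAux.normal_form w
    obtain ⟨i, hilt, hiz⟩ := HeisAux.zpow_reduce hpr (HeisAux.relZ (p := p) (n := n) (r := r)) (a * β - α * b)
    refine ⟨i, by omega, ?_⟩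
    rw [hg', conj_form HeisAux.commXZ HeisAux.commYZ HeisAux.relYX]
    rw [show γ + a * β - α * b = γ + (a * β - α * b) by ring, zpow_add,
      ← mul_assoc, hiz]
  · rintro ⟨i, hile, rfl⟩
    rw [isConj_iff]
    rcases not_and_or.mp hnd with hα | hβ
    · -- p ∤ α : conjugate by a power of Y
      have hPrime : Prime (p : ℤ) := Int.prime_iff_natAbs_prime.mpr (by simpa using hp)
      obtain ⟨u, v, huv⟩ : IsCoprime ((p : ℤ) ^ r) α :=
        ((hPrime.coprime_iff_not_dvd).mpr hα).pow_left
      refine ⟨heisY p n r ^ (-((i : ℤ) * v)), ?_⟩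
      have hw : heisY p n r ^ (-((i : ℤ) * v)) =
          heisX p n r ^ (0 : ℤ) * heisY p n r ^ (-((i : ℤ) * v)) * heisZ p n r ^ (0 : ℤ) := by
        simp
      have hR : g * heisZ p n r ^ i =
          heisX p n r ^ α * heisY p n r ^ β * heisZ p n r ^ (γ + (i : ℤ)) := by
        rw [← zpow_natCast (heisZ p n r) i, hgz]
      rw [hR, hg', hw, conj_form HeisAux.commXZ HeisAux.commYZ HeisAux.relYX,
        show γ + 0 * β - α * (-((i : ℤ) * v)) = γ + α * ((i : ℤ) * v) by ring]
      congr 1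
      apply HeisAux.zpow_eq_zpow_of_dvd_sub (HeisAux.relZ (p := p) (n := n) (r := r))
      refine ⟨-((i : ℤ) * u), ?_⟩
      push_cast
      linear_combination (i : ℤ) * huv
    · -- p ∤ β : conjugate by a power of X
      have hPrime : Prime (p : ℤ) := Int.prime_iff_natAbs_prime.mpr (by simpa using hp)
      obtain ⟨u, v, huv⟩ : IsCoprime ((p : ℤ) ^ r) β :=
        ((hPrime.coprime_iff_not_dvd).mpr hβ).pow_left
      refine ⟨heisX p n r ^ ((i : ℤ) * v), ?_⟩
      have hw : heisX p n r ^ ((i : ℤ) * v) =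
          heisX p n r ^ ((i : ℤ) * v) * heisY p n r ^ (0 : ℤ) * heisZ p n r ^ (0 : ℤ) := by
        simp
      have hR : g * heisZ p n r ^ i =
          heisX p n r ^ α * heisY p n r ^ β * heisZ p n r ^ (γ + (i : ℤ)) := by
        rw [← zpow_natCast (heisZ p n r) i, hgz]
      rw [hR, hg', hw, conj_form HeisAux.commXZ HeisAux.commYZ HeisAux.relYX,
        show γ + (i : ℤ) * v * β - α * 0 = γ + (i : ℤ) * v * β by ring]
      congr 1
      apply HeisAux.zpow_eq_zpow_of_dvd_sub (HeisAux.relZ (p := p) (n := n) (r := r))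
      refine ⟨-((i : ℤ) * u), ?_⟩
      push_cast
      linear_combination (i : ℤ) * huv
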